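/- Let n ≥ 3 be an integer. There exists ε₀ > 0 such that for every ε ∈ (0, ε₀) and every ρ ∈ (ε, 1), one has Q_ε(ρ) > 0, where Q_ε is the polynomial associated with the parameter choices α(ε), β(ε), γ(ε), δ(ε). -/

import Mathlib

set_option maxHeartbeats 1000000



/-- δ(ε) as given in (4.6) of the paper. -/
noncomputable def deltaE (n : ℕ) (ε : ℝ) : ℝ :=
  (ε ^ (n - 2) * (1 - ε)
    - ((-(n : ℝ) * ε ^ (n + 1) + ((n : ℝ) + 1) * ε ^ n - 1) * ((n : ℝ) + 2)
        * (-1 + ((n : ℝ) + 1) * ε / ((n : ℝ) - 1) - ε ^ (n - 1)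
            + ((n : ℝ) - 3) * ε ^ n / ((n : ℝ) - 1)))
      / (-(n : ℝ) * ε ^ (n + 2) + ((n : ℝ) + 2) * ε ^ (n + 1) + (n : ℝ) - ((n : ℝ) + 2) * ε)
    + ((n : ℝ) * ((n : ℝ) - 3) / ((n : ℝ) - 1)) * ε ^ (n - 1)
    - ((n : ℝ) - 1) * ε ^ (n - 2) + ((n : ℝ) + 1) / ((n : ℝ) - 1)) *
  (((-(n : ℝ) * ε ^ (n + 1) + ((n : ℝ) + 1) * ε ^ n - 1) * ((n : ℝ) + 2))
      / (-(n : ℝ) * ε ^ (n + 2) + ((n : ℝ) + 2) * ε ^ (n + 1) + (n : ℝ) - ((n : ℝ) + 2) * ε)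
      * ((ε ^ (n + 1) - 1) / ((n : ℝ) * ((n : ℝ) + 1))
          + (ε - ε ^ n) / ((n : ℝ) * ((n : ℝ) - 1)))
    + (-((n : ℝ) - 1) * ε ^ n + (n : ℝ) * ε ^ (n - 1) - 1) / ((n : ℝ) * ((n : ℝ) - 1)))⁻¹

/-- γ(ε) as given in (4.5) of the paper. -/
noncomputable def gammaE (n : ℕ) (ε : ℝ) : ℝ :=
  (n : ℝ) * ((n : ℝ) + 1) * ((n : ℝ) + 2) *
    (((ε ^ (n + 1) - 1) / ((n : ℝ) * ((n : ℝ) + 1))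
        + (ε - ε ^ n) / ((n : ℝ) * ((n : ℝ) - 1))) * deltaE n ε
      - 1 + ((n : ℝ) + 1) / ((n : ℝ) - 1) * ε - ε ^ (n - 1)
      + ((n : ℝ) - 3) / ((n : ℝ) - 1) * ε ^ n)
    / (-(n : ℝ) * ε ^ (n + 2) + ((n : ℝ) + 2) * ε ^ (n + 1) + (n : ℝ) - ((n : ℝ) + 2) * ε)

/-- α(ε) as given in (4.3) of the paper. -/
noncomputable def alphaE (n : ℕ) (ε : ℝ) : ℝ :=
  -1 - deltaE n ε / ((n : ℝ) * ((n : ℝ) + 1)) - gammaE n ε / (((n : ℝ) + 1) * ((n : ℝ) + 2))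

/-- β(ε) as given in (4.4) of the paper. -/
noncomputable def betaE (n : ℕ) (ε : ℝ) : ℝ :=
  ((n : ℝ) + 1) / ((n : ℝ) - 1) + deltaE n ε / ((n : ℝ) * ((n : ℝ) - 1))
    + gammaE n ε / ((n : ℝ) * ((n : ℝ) + 1))

/-- The polynomial Q_ε(ρ) associated with the parameter choices α(ε), β(ε), γ(ε), δ(ε). -/
noncomputable def Qe (n : ℕ) (ε : ℝ) (ρ : ℝ) : ℝ :=
  -gammaE n ε * ρ ^ (n + 2) / (((n : ℝ) + 1) * ((n : ℝ) + 2))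
    - (deltaE n ε - gammaE n ε) * ρ ^ (n + 1) / ((n : ℝ) * ((n : ℝ) + 1))
    - (1 - (2 * (n : ℝ) + deltaE n ε) / ((n : ℝ) * ((n : ℝ) - 1))) * ρ ^ n
    + ρ ^ (n - 1) - alphaE n ε - betaE n ε * ρ

-- canonical defs
noncomputable def pD1 (m : ℕ) (ε : ℝ) : ℝ :=
  -((m:ℝ)+3) * ε ^ (m+5) + ((m:ℝ)+5) * ε ^ (m+4) + ((m:ℝ)+3) - ((m:ℝ)+5) * ε
noncomputable def pJ (m : ℕ) (ε : ℝ) : ℝ :=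
  -((m:ℝ)+3) * ε ^ (m+4) + ((m:ℝ)+4) * ε ^ (m+3) - 1
noncomputable def pKd (m : ℕ) (ε : ℝ) : ℝ :=
  (ε ^ (m+4) - 1) / (((m:ℝ)+3) * ((m:ℝ)+4)) + (ε - ε ^ (m+3)) / (((m:ℝ)+3) * ((m:ℝ)+2))
noncomputable def pK0 (m : ℕ) (ε : ℝ) : ℝ :=
  -1 + ((m:ℝ)+4) * ε / ((m:ℝ)+2) - ε ^ (m+2) + (m:ℝ) * ε ^ (m+3) / ((m:ℝ)+2)
noncomputable def pL (m : ℕ) (ε : ℝ) : ℝ :=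
  (-((m:ℝ)+2) * ε ^ (m+3) + ((m:ℝ)+3) * ε ^ (m+2) - 1) / (((m:ℝ)+3) * ((m:ℝ)+2))
noncomputable def pNd (m : ℕ) (ε : ℝ) : ℝ :=
  ε ^ (m+1) * (1 - ε) - (pJ m ε * ((m:ℝ)+5) * pK0 m ε) / pD1 m ε
    + (((m:ℝ)+3) * (m:ℝ) / ((m:ℝ)+2)) * ε ^ (m+2) - ((m:ℝ)+2) * ε ^ (m+1) + ((m:ℝ)+4) / ((m:ℝ)+2)
noncomputable def pDd (m : ℕ) (ε : ℝ) : ℝ :=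
  (pJ m ε * ((m:ℝ)+5)) / pD1 m ε * pKd m ε + pL m ε
noncomputable def aF (m : ℕ) (d g : ℝ) : ℝ :=
  -1 - d/(((m:ℝ)+3)*((m:ℝ)+4)) - g/(((m:ℝ)+4)*((m:ℝ)+5))
noncomputable def bF (m : ℕ) (d g : ℝ) : ℝ :=
  ((m:ℝ)+4)/((m:ℝ)+2) + d/(((m:ℝ)+3)*((m:ℝ)+2)) + g/(((m:ℝ)+3)*((m:ℝ)+4))
noncomputable def cQ (m : ℕ) (d g ρ : ℝ) : ℝ :=
  -g*ρ^(m+5)/(((m:ℝ)+4)*((m:ℝ)+5)) - (d-g)*ρ^(m+4)/(((m:ℝ)+3)*((m:ℝ)+4))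
    - (1-(2*((m:ℝ)+3)+d)/(((m:ℝ)+3)*((m:ℝ)+2)))*ρ^(m+3) + ρ^(m+2) - aF m d g - bF m d g * ρ
noncomputable def cQd (m : ℕ) (d g ρ : ℝ) : ℝ :=
  -g*(((m:ℝ)+5)*ρ^(m+4))/(((m:ℝ)+4)*((m:ℝ)+5)) - (d-g)*(((m:ℝ)+4)*ρ^(m+3))/(((m:ℝ)+3)*((m:ℝ)+4))
    - (1-(2*((m:ℝ)+3)+d)/(((m:ℝ)+3)*((m:ℝ)+2)))*(((m:ℝ)+3)*ρ^(m+2)) + ((m:ℝ)+2)*ρ^(m+1) - bF m d g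
noncomputable def cC (m : ℕ) (d g ρ : ℝ) : ℝ :=
  -g*ρ^3 + (g-d)*ρ^2 + (d - (m:ℝ)*((m:ℝ)+3))*ρ + ((m:ℝ)+2)*((m:ℝ)+1)

-- bridges
lemma deltaE_eq (m : ℕ) (ε : ℝ) :
    deltaE (m+3) ε = pNd m ε * (pDd m ε)⁻¹ := by
  have e1 : m+3-2 = m+1 := by omega
  have e2 : m+3-1 = m+2 := by omega
  have e3 : m+3+1 = m+4 := by omega
  have e4 : m+3+2 = m+5 := by omega
  simp only [deltaE, pNd, pDd, pJ, pD1, pK0, pKd, pL, e1, e2, e3, e4]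
  push_cast
  ring_nf

lemma gammaE_eq (m : ℕ) (ε : ℝ) :
    gammaE (m+3) ε = ((m:ℝ)+3)*((m:ℝ)+4)*((m:ℝ)+5)
      * (pKd m ε * deltaE (m+3) ε + pK0 m ε) / pD1 m ε := by
  have e2 : m+3-1 = m+2 := by omega
  have e3 : m+3+1 = m+4 := by omega
  have e4 : m+3+2 = m+5 := by omega
  simp only [gammaE, pKd, pK0, pD1, e2, e3, e4]
  push_cast
  ring_nf

lemma alphaE_eq (m : ℕ) (ε : ℝ) :
    alphaE (m+3) ε = aF m (deltaE (m+3) ε) (gammaE (m+3) ε) := by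
  simp only [alphaE, aF]; push_cast; ring_nf

lemma betaE_eq (m : ℕ) (ε : ℝ) :
    betaE (m+3) ε = bF m (deltaE (m+3) ε) (gammaE (m+3) ε) := by
  simp only [betaE, bF]; push_cast; ring_nf

lemma Qe_eq (m : ℕ) (ε ρ : ℝ) :
    Qe (m+3) ε ρ = cQ m (deltaE (m+3) ε) (gammaE (m+3) ε) ρ := by
  have e2 : m+3-1 = m+2 := by omega
  have e3 : m+3+1 = m+4 := by omega
  have e4 : m+3+2 = m+5 := by omega
  simp only [Qe, cQ, ← alphaE_eq, ← betaE_eq, e2, e3, e4]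
  push_cast
  ring_nf

/-- bracket appearing in Q(ε) -/
noncomputable def pB (m : ℕ) (ε : ℝ) : ℝ :=
  (1 - ε^(m+5))/(((m:ℝ)+4)*((m:ℝ)+5)) + (ε^(m+4) - ε)/(((m:ℝ)+3)*((m:ℝ)+4))
/-- constant part in Q'(ε) -/
noncomputable def pMc (m : ℕ) (ε : ℝ) : ℝ :=
  -((m:ℝ)+3)*(m:ℝ)*ε^(m+2)/((m:ℝ)+2) + ((m:ℝ)+2)*ε^(m+1) - ((m:ℝ)+4)/((m:ℝ)+2)

section
variable (m : ℕ) (ε d g : ℝ)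

lemma stepA : cQ m d g ε = g * pB m ε - d * pKd m ε - pK0 m ε := by
  have h2 : ((m:ℝ)+2) ≠ 0 := by positivity
  have h3 : ((m:ℝ)+3) ≠ 0 := by positivity
  have h4 : ((m:ℝ)+4) ≠ 0 := by positivity
  have h5 : ((m:ℝ)+5) ≠ 0 := by positivity
  simp only [cQ, aF, bF, pB, pKd, pK0]
  field_simp
  ring

lemma stepB : pB m ε = pD1 m ε / ((((m:ℝ)+3)*((m:ℝ)+4))*((m:ℝ)+5)) := by
  have h3 : ((m:ℝ)+3) ≠ 0 := by positivity
  have h4 : ((m:ℝ)+4) ≠ 0 := by positivity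
  have h5 : ((m:ℝ)+5) ≠ 0 := by positivity
  simp only [pB, pD1]
  field_simp
  ring

lemma cQ_eps (hD1 : pD1 m ε ≠ 0)
    (hg : g = ((m:ℝ)+3)*((m:ℝ)+4)*((m:ℝ)+5) * (pKd m ε * d + pK0 m ε) / pD1 m ε) :
    cQ m d g ε = 0 := by
  have h3 : ((m:ℝ)+3) ≠ 0 := by positivity
  have h4 : ((m:ℝ)+4) ≠ 0 := by positivity
  have h5 : ((m:ℝ)+5) ≠ 0 := by positivity
  rw [stepA, stepB, hg]
  field_simp
  ring

lemma step1 : cQd m d g ε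
    = g * pJ m ε / (((m:ℝ)+3)*((m:ℝ)+4)) + d * pL m ε + pMc m ε := by
  have h2 : ((m:ℝ)+2) ≠ 0 := by positivity
  have h3 : ((m:ℝ)+3) ≠ 0 := by positivity
  have h4 : ((m:ℝ)+4) ≠ 0 := by positivity
  have h5 : ((m:ℝ)+5) ≠ 0 := by positivity
  simp only [cQd, bF, pJ, pL, pMc]
  field_simp
  ring

lemma step5 : pNd m ε = ε^(m+1)*(1-ε) - (((m:ℝ)+5) * pJ m ε * pK0 m ε) / pD1 m ε - pMc m ε := by
  simp only [pNd, pMc]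
  ring

lemma cQd_eps (hD1 : pD1 m ε ≠ 0) (hDd : pDd m ε ≠ 0)
    (hg : g = ((m:ℝ)+3)*((m:ℝ)+4)*((m:ℝ)+5) * (pKd m ε * d + pK0 m ε) / pD1 m ε)
    (hd : d = pNd m ε * (pDd m ε)⁻¹) :
    cQd m d g ε = ε^(m+1) * (1-ε) := by
  have h3 : ((m:ℝ)+3) ≠ 0 := by positivity
  have h4 : ((m:ℝ)+4) ≠ 0 := by positivity
  have h5 : ((m:ℝ)+5) ≠ 0 := by positivity
  have hdd : d * pDd m ε = pNd m ε := by
    rw [hd, mul_assoc, inv_mul_cancel₀ hDd, mul_one]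
  have hgj : g * pJ m ε / (((m:ℝ)+3)*((m:ℝ)+4))
      = d * ((pJ m ε * ((m:ℝ)+5)) / pD1 m ε * pKd m ε)
        + ((m:ℝ)+5) * pJ m ε * pK0 m ε / pD1 m ε := by
    rw [hg]; field_simp
  rw [step1, hgj]
  have key : d * ((pJ m ε * ((m:ℝ)+5)) / pD1 m ε * pKd m ε) + d * pL m ε = pNd m ε := by
    rw [← mul_add, ← pDd, hdd]
  linarith [key, step5 m ε]
end


lemma hasDerivAt_cQ (m : ℕ) (d g ρ : ℝ) :
    HasDerivAt (fun x => cQ m d g x) (cQd m d g ρ) ρ := by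
  have h1 := hasDerivAt_pow (m+5) ρ
  have h2 := hasDerivAt_pow (m+4) ρ
  have h3 := hasDerivAt_pow (m+3) ρ
  have h4 := hasDerivAt_pow (m+2) ρ
  rw [show m+5-1 = m+4 from by omega] at h1
  rw [show m+4-1 = m+3 from by omega] at h2
  rw [show m+3-1 = m+2 from by omega] at h3
  rw [show m+2-1 = m+1 from by omega] at h4
  have H := ((((((h1.const_mul (-g)).div_const (((m:ℝ)+4)*((m:ℝ)+5))).sub
      ((h2.const_mul (d-g)).div_const (((m:ℝ)+3)*((m:ℝ)+4)))).sub
      ((h3.const_mul (1-(2*((m:ℝ)+3)+d)/(((m:ℝ)+3)*((m:ℝ)+2)))))).add h4).sub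
      (hasDerivAt_const ρ (aF m d g))).sub ((hasDerivAt_id ρ).const_mul (bF m d g))
  have hv : -g * (↑(m + 5) * ρ ^ (m + 4)) / ((↑m + 4) * (↑m + 5))
      - (d - g) * (↑(m + 4) * ρ ^ (m + 3)) / ((↑m + 3) * (↑m + 4))
      - (1 - (2 * (↑m + 3) + d) / ((↑m + 3) * (↑m + 2))) * (↑(m + 3) * ρ ^ (m + 2))
      + ↑(m + 2) * ρ ^ (m + 1) - 0 - bF m d g * 1 = cQd m d g ρ := by
    simp only [cQd]; push_cast; ring
  rw [hv] at H
  exact H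

lemma hasDerivAt_cQd (m : ℕ) (d g ρ : ℝ) :
    HasDerivAt (fun x => cQd m d g x) (ρ^m * cC m d g ρ) ρ := by
  have h2 := hasDerivAt_pow (m+4) ρ
  have h3 := hasDerivAt_pow (m+3) ρ
  have h4 := hasDerivAt_pow (m+2) ρ
  have h5 := hasDerivAt_pow (m+1) ρ
  rw [show m+4-1 = m+3 from by omega] at h2
  rw [show m+3-1 = m+2 from by omega] at h3
  rw [show m+2-1 = m+1 from by omega] at h4
  rw [show m+1-1 = m from by omega] at h5
  have H := (((((h2.const_mul (((m:ℝ)+5))).const_mul (-g)).div_const (((m:ℝ)+4)*((m:ℝ)+5))).sub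
      (((h3.const_mul (((m:ℝ)+4))).const_mul (d-g)).div_const (((m:ℝ)+3)*((m:ℝ)+4)))).sub
      ((h4.const_mul (((m:ℝ)+3))).const_mul (1-(2*((m:ℝ)+3)+d)/(((m:ℝ)+3)*((m:ℝ)+2))))).add
      (h5.const_mul (((m:ℝ)+2))) |>.sub (hasDerivAt_const ρ (bF m d g))
  have h2' : ((m:ℝ)+2) ≠ 0 := by positivity
  have h3' : ((m:ℝ)+3) ≠ 0 := by positivity
  have h4' : ((m:ℝ)+4) ≠ 0 := by positivity
  have h5' : ((m:ℝ)+5) ≠ 0 := by positivity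
  have hv : -g * ((↑m + 5) * (↑(m + 4) * ρ ^ (m + 3))) / ((↑m + 4) * (↑m + 5))
      - (d - g) * ((↑m + 4) * (↑(m + 3) * ρ ^ (m + 2))) / ((↑m + 3) * (↑m + 4))
      - (1 - (2 * (↑m + 3) + d) / ((↑m + 3) * (↑m + 2))) * ((↑m + 3) * (↑(m + 2) * ρ ^ (m + 1)))
      + (↑m + 2) * (↑(m + 1) * ρ ^ m) - 0 = ρ^m * cC m d g ρ := by
    simp only [cC]; push_cast; field_simp; ring
  rw [hv] at H
  exact H

lemma cC_pos_left (m : ℕ) (d g ρ : ℝ)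
    (hu : |d + ((m:ℝ)+3)*((m:ℝ)+4)| ≤ 1/1000) (hg : |g| ≤ 1/1000)
    (hρ0 : 0 ≤ ρ) (hρ1 : ρ ≤ ((m:ℝ)+1)/((m:ℝ)+5)) : 0 < cC m d g ρ := by
  set M := (m:ℝ) with hM
  have hM0 : 0 ≤ M := Nat.cast_nonneg m
  obtain ⟨hu1, hu2⟩ := abs_le.mp hu
  obtain ⟨hg1, hg2⟩ := abs_le.mp hg
  have h5 : (0:ℝ) < M + 5 := by linarith
  have hρ1' : ρ*(M+5) ≤ M+1 := (le_div_iff₀ h5).mp hρ1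
  have hρle1 : ρ ≤ 1 := by nlinarith [hρ1']
  -- quadratic part lower bound: quad ≥ 2*(M+1)^2/(M+5)^2 ≥ 2/25
  have key : ((M+1) - (M+5)*ρ) * (2*(M+3)*(M+2)*(M+5) - (M+3)*(M+4)*((M+5)*ρ + (M+1))) ≥ 0 := by
    apply mul_nonneg (by linarith)
    nlinarith [mul_le_mul_of_nonneg_left hρ1' (show (0:ℝ) ≤ (M+3)*(M+4) by positivity), hM0]
  have hquad : (M+3)*(M+4)*ρ^2 - 2*(M+3)*(M+2)*ρ + (M+2)*(M+1) ≥ 2/25 := by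
    have h25 : 2*(M+1)^2/(M+5)^2 ≥ 2/25 := by
      rw [ge_iff_le, div_le_div_iff₀ (by norm_num) (by positivity)]
      nlinarith
    have hq2 : ((M+3)*(M+4)*ρ^2 - 2*(M+3)*(M+2)*ρ + (M+2)*(M+1)) * (M+5)^2 ≥ 2*(M+1)^2 := by
      nlinarith [key]
    have hq3 : (M+3)*(M+4)*ρ^2 - 2*(M+3)*(M+2)*ρ + (M+2)*(M+1) ≥ 2*(M+1)^2/(M+5)^2 := by
      rw [ge_iff_le, div_le_iff₀ (by positivity)]
      linarith
    linarith [hq3, h25]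
  have herr : -g*ρ^3 + (g - (d + (M+3)*(M+4)))*ρ^2 + (d + (M+3)*(M+4))*ρ ≥ -(4/1000) := by
    nlinarith [pow_le_one₀ hρ0 hρle1 (n := 3), pow_le_one₀ hρ0 hρle1 (n := 2),
      sq_nonneg ρ, pow_nonneg hρ0 3]
  have hexp : cC m d g ρ = ((M+3)*(M+4)*ρ^2 - 2*(M+3)*(M+2)*ρ + (M+2)*(M+1))
      + (-g*ρ^3 + (g - (d + (M+3)*(M+4)))*ρ^2 + (d + (M+3)*(M+4))*ρ) := by
    simp only [cC, hM]; ring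
  rw [hexp]
  linarith

lemma cC_pos_right (m : ℕ) (d g ρ : ℝ)
    (hu : |d + ((m:ℝ)+3)*((m:ℝ)+4)| ≤ 1/1000) (hg : |g| ≤ 1/1000)
    (hρ0 : 1 - 1/(4*((m:ℝ)+3)) ≤ ρ) (hρ1 : ρ ≤ 1) : 0 < cC m d g ρ := by
  set M := (m:ℝ) with hM
  have hM0 : 0 ≤ M := Nat.cast_nonneg m
  obtain ⟨hu1, hu2⟩ := abs_le.mp hu
  obtain ⟨hg1, hg2⟩ := abs_le.mp hg
  have h3 : (0:ℝ) < M + 3 := by linarith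
  have hρpos : 0 ≤ ρ := by
    have : 1/(4*(M+3)) ≤ 1/2 := by
      rw [div_le_div_iff₀ (by positivity) (by norm_num)]; linarith
    linarith
  have hh : (1-ρ) ≤ 1/(4*(M+3)) := by linarith
  have hh' : 4*(M+3)*(1-ρ) ≤ 1 := by
    have hc : (4*(M+3)) * (1/(4*(M+3))) = 1 := by field_simp
    nlinarith [mul_le_mul_of_nonneg_left hh (show (0:ℝ) ≤ 4*(M+3) by positivity)]
  have hquad : (M+3)*(M+4)*ρ^2 - 2*(M+3)*(M+2)*ρ + (M+2)*(M+1) ≥ 1 := by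
    nlinarith [mul_nonneg (show (0:ℝ) ≤ (M+3)*(M+4) by positivity) (sq_nonneg (1-ρ)), hh']
  have herr : -g*ρ^3 + (g - (d + (M+3)*(M+4)))*ρ^2 + (d + (M+3)*(M+4))*ρ ≥ -(4/1000) := by
    nlinarith [pow_le_one₀ hρpos hρ1 (n := 3), pow_le_one₀ hρpos hρ1 (n := 2),
      sq_nonneg ρ, pow_nonneg hρpos 3]
  have hexp : cC m d g ρ = ((M+3)*(M+4)*ρ^2 - 2*(M+3)*(M+2)*ρ + (M+2)*(M+1))
      + (-g*ρ^3 + (g - (d + (M+3)*(M+4)))*ρ^2 + (d + (M+3)*(M+4))*ρ) := by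
    simp only [cC, hM]; ring
  rw [hexp]
  linarith

noncomputable def kap (m : ℕ) : ℝ := (1/5)^(m+2) * (1/(4*((m:ℝ)+3)))^2 / 8

lemma kap_pos (m : ℕ) : 0 < kap m := by
  have : (0:ℝ) ≤ (m:ℝ) := Nat.cast_nonneg m
  unfold kap; positivity

lemma kap_le (m : ℕ) : kap m ≤ 1/1000 := by
  have hM0 : (0:ℝ) ≤ (m:ℝ) := Nat.cast_nonneg m
  unfold kap
  have h1 : ((1:ℝ)/5)^(m+2) ≤ (1/5)^2 := by
    apply pow_le_pow_of_le_one (by norm_num) (by norm_num)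
    omega
  have h2 : ((1:ℝ)/(4*((m:ℝ)+3)))^2 ≤ (1/12)^2 := by
    apply pow_le_pow_left₀ (by positivity)
    rw [div_le_div_iff₀ (by positivity) (by norm_num)]
    linarith
  have h3 : (0:ℝ) ≤ (1/(4*((m:ℝ)+3)))^2 := by positivity
  nlinarith [h1, h2, h3]

lemma bnd_aux (x t c k : ℝ) (hx : |x| ≤ k) (ht0 : 0 ≤ t) (ht1 : t ≤ 1) (hc : 6 ≤ c) :
    |x * t / c| ≤ k / 6 := by
  have hk : 0 ≤ k := le_trans (abs_nonneg x) hx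
  have hc0 : 0 < c := by linarith
  rw [abs_div, abs_mul, abs_of_pos hc0, abs_of_nonneg ht0]
  rw [div_le_div_iff₀ hc0 (by norm_num)]
  have h1 : |x| * t ≤ k := by nlinarith [abs_nonneg x]
  nlinarith

/-- middle-region decomposition -/
lemma cQ_decomp (m : ℕ) (d g u ρ : ℝ) (hu : u = d + ((m:ℝ)+3)*((m:ℝ)+4)) :
    cQ m d g ρ = ρ^(m+2)*(1-ρ)^2
      + ((-g)*ρ^(m+5)/(((m:ℝ)+4)*((m:ℝ)+5)) + (g-u)*ρ^(m+4)/(((m:ℝ)+3)*((m:ℝ)+4))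
        + u*ρ^(m+3)/(((m:ℝ)+3)*((m:ℝ)+2)) + u*1/(((m:ℝ)+3)*((m:ℝ)+4))
        + g*1/(((m:ℝ)+4)*((m:ℝ)+5)) + (-u)*ρ/(((m:ℝ)+3)*((m:ℝ)+2))
        + (-g)*ρ/(((m:ℝ)+3)*((m:ℝ)+4))) := by
  have h2 : ((m:ℝ)+2) ≠ 0 := by positivity
  have h3 : ((m:ℝ)+3) ≠ 0 := by positivity
  have h4 : ((m:ℝ)+4) ≠ 0 := by positivity
  have h5 : ((m:ℝ)+5) ≠ 0 := by positivity
  subst hu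
  simp only [cQ, aF, bF]
  field_simp
  ring

lemma cQ_pos_mid (m : ℕ) (d g ρ : ℝ)
    (hu : |d + ((m:ℝ)+3)*((m:ℝ)+4)| ≤ kap m) (hg : |g| ≤ kap m)
    (hρ0 : ((m:ℝ)+1)/((m:ℝ)+5) ≤ ρ) (hρ1 : ρ ≤ 1 - 1/(4*((m:ℝ)+3))) :
    0 < cQ m d g ρ := by
  set M := (m:ℝ) with hM
  have hM0 : 0 ≤ M := Nat.cast_nonneg m
  set u := d + (M+3)*(M+4) with hud
  have hk := kap_pos m
  -- basic ρ bounds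
  have hρlow : (1:ℝ)/5 ≤ ρ := by
    refine le_trans ?_ hρ0
    rw [div_le_div_iff₀ (by norm_num) (by positivity)]
    linarith
  have hρpos : 0 ≤ ρ := by linarith
  have hρle1 : ρ ≤ 1 := by
    have : 0 < 1/(4*(M+3)) := by positivity
    linarith
  have h1ρ : 1/(4*(M+3)) ≤ 1 - ρ := by linarith
  -- main term lower bound
  have hmain : (1/5:ℝ)^(m+2) * (1/(4*(M+3)))^2 ≤ ρ^(m+2)*(1-ρ)^2 := by
    have p1 : (1/5:ℝ)^(m+2) ≤ ρ^(m+2) := pow_le_pow_left₀ (by norm_num) hρlow _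
    have p2 : (1/(4*(M+3)))^2 ≤ (1-ρ)^2 := by
      apply pow_le_pow_left₀ (by positivity) h1ρ
    have : (0:ℝ) ≤ (1/5:ℝ)^(m+2) := by positivity
    nlinarith [pow_nonneg hρpos (m+2), sq_nonneg (1-ρ), p1, p2]
  -- bounds on correction terms
  have hden2 : (6:ℝ) ≤ (M+3)*(M+2) := by nlinarith
  have hden3 : (6:ℝ) ≤ (M+3)*(M+4) := by nlinarith
  have hden4 : (6:ℝ) ≤ (M+4)*(M+5) := by nlinarith
  have hponm : ∀ k : ℕ, 0 ≤ ρ^k ∧ ρ^k ≤ 1 := fun k =>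
    ⟨pow_nonneg hρpos k, pow_le_one₀ hρpos hρle1⟩
  have hgu : |g - u| ≤ 2 * kap m := by
    calc |g - u| ≤ |g| + |u| := abs_sub _ _
    _ ≤ 2 * kap m := by rw [hud] at *; linarith [hu, hg]
  have hnu : |(-u)| ≤ kap m := by rw [abs_neg]; exact hu
  have hng : |(-g)| ≤ kap m := by rw [abs_neg]; exact hg
  have b1 := bnd_aux (-g) (ρ^(m+5)) ((M+4)*(M+5)) (kap m) hng (hponm (m+5)).1 (hponm (m+5)).2 hden4
  have b2 := bnd_aux (g-u) (ρ^(m+4)) ((M+3)*(M+4)) (2*kap m) hgu (hponm (m+4)).1 (hponm (m+4)).2 hden3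
  have b3 := bnd_aux u (ρ^(m+3)) ((M+3)*(M+2)) (kap m) hu (hponm (m+3)).1 (hponm (m+3)).2 hden2
  have b4 := bnd_aux u 1 ((M+3)*(M+4)) (kap m) hu (by norm_num) (by norm_num) hden3
  have b5 := bnd_aux g 1 ((M+4)*(M+5)) (kap m) hg (by norm_num) (by norm_num) hden4
  have b6 := bnd_aux (-u) ρ ((M+3)*(M+2)) (kap m) hnu hρpos hρle1 hden2
  have b7 := bnd_aux (-g) ρ ((M+3)*(M+4)) (kap m) hng hρpos hρle1 hden3
  rw [cQ_decomp m d g u ρ hud]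
  have hkap8 : 8 * kap m = (1/5:ℝ)^(m+2) * (1/(4*(M+3)))^2 := by
    rw [kap]; ring
  have e1 := abs_le.mp b1
  have e2 := abs_le.mp b2
  have e3 := abs_le.mp b3
  have e4 := abs_le.mp b4
  have e5 := abs_le.mp b5
  have e6 := abs_le.mp b6
  have e7 := abs_le.mp b7
  nlinarith [hmain, e1.1, e2.1, e3.1, e4.1, e5.1, e6.1, e7.1, hk]

section
variable (m : ℕ)

lemma pD1_cont : Continuous (fun ε : ℝ => pD1 m ε) := by unfold pD1; continuity
lemma pJ_cont : Continuous (fun ε : ℝ => pJ m ε) := by unfold pJ; continuity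
lemma pKd_cont : Continuous (fun ε : ℝ => pKd m ε) := by unfold pKd; continuity
lemma pK0_cont : Continuous (fun ε : ℝ => pK0 m ε) := by unfold pK0; continuity
lemma pL_cont : Continuous (fun ε : ℝ => pL m ε) := by unfold pL; continuity

lemma pD1_zero : pD1 m 0 = (m:ℝ)+3 := by simp [pD1]
lemma pD1_zero_ne : pD1 m 0 ≠ 0 := by rw [pD1_zero]; positivity

lemma pNd_contAt : ContinuousAt (fun ε : ℝ => pNd m ε) 0 := by
  unfold pNd
  refine ContinuousAt.add (ContinuousAt.sub (ContinuousAt.add (ContinuousAt.sub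
    (by fun_prop) ?_) (by fun_prop)) (by fun_prop)) (by fun_prop)
  exact ContinuousAt.div (by exact ((pJ_cont m).mul continuous_const |>.mul (pK0_cont m)).continuousAt)
    ((pD1_cont m).continuousAt) (pD1_zero_ne m)

lemma pDd_contAt : ContinuousAt (fun ε : ℝ => pDd m ε) 0 := by
  unfold pDd
  refine ContinuousAt.add (ContinuousAt.mul ?_ (pKd_cont m).continuousAt) (pL_cont m).continuousAt
  exact ContinuousAt.div ((pJ_cont m).mul continuous_const).continuousAt
    (pD1_cont m).continuousAt (pD1_zero_ne m)

lemma pDd_zero : pDd m 0 = -2/((((m:ℝ)+3)^2*((m:ℝ)+4)*((m:ℝ)+2))) := by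
  have h2 : ((m:ℝ)+2) ≠ 0 := by positivity
  have h3 : ((m:ℝ)+3) ≠ 0 := by positivity
  have h4 : ((m:ℝ)+4) ≠ 0 := by positivity
  simp [pDd, pJ, pKd, pL, pD1]
  field_simp
  ring

lemma pDd_zero_ne : pDd m 0 ≠ 0 := by
  rw [pDd_zero]
  have h : (0:ℝ) < (((m:ℝ)+3)^2*((m:ℝ)+4)*((m:ℝ)+2)) := by positivity
  simp only [ne_eq, div_eq_zero_iff, not_or]
  constructor <;> [norm_num; exact ne_of_gt h]

lemma deltaE_contAt : ContinuousAt (fun ε : ℝ => deltaE (m+3) ε) 0 := by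
  simp only [deltaE_eq]
  exact (pNd_contAt m).mul ((pDd_contAt m).inv₀ (pDd_zero_ne m))

lemma pNd_zero : pNd m 0 = -((m:ℝ)+5)/((m:ℝ)+3) + ((m:ℝ)+4)/((m:ℝ)+2) := by
  have h3 : ((m:ℝ)+3) ≠ 0 := by positivity
  simp [pNd, pJ, pK0, pD1]
  field_simp
  ring

lemma deltaE_zero : deltaE (m+3) 0 = -(((m:ℝ)+3)*((m:ℝ)+4)) := by
  have h2 : ((m:ℝ)+2) ≠ 0 := by positivity
  have h3 : ((m:ℝ)+3) ≠ 0 := by positivity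
  have h4 : ((m:ℝ)+4) ≠ 0 := by positivity
  rw [deltaE_eq, pNd_zero, pDd_zero]
  rw [show ((-2:ℝ)/((((m:ℝ)+3)^2*((m:ℝ)+4)*((m:ℝ)+2))))⁻¹
    = -((((m:ℝ)+3)^2*((m:ℝ)+4)*((m:ℝ)+2))/2) by field_simp]
  field_simp
  ring

lemma gammaE_contAt : ContinuousAt (fun ε : ℝ => gammaE (m+3) ε) 0 := by
  simp only [gammaE_eq]
  refine ContinuousAt.div ?_ (pD1_cont m).continuousAt (pD1_zero_ne m)
  exact (continuousAt_const.mul (((pKd_cont m).continuousAt.mul (deltaE_contAt m)).add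
    (pK0_cont m).continuousAt))

lemma gammaE_zero : gammaE (m+3) 0 = 0 := by
  have h2 : ((m:ℝ)+2) ≠ 0 := by positivity
  have h3 : ((m:ℝ)+3) ≠ 0 := by positivity
  have h4 : ((m:ℝ)+4) ≠ 0 := by positivity
  rw [gammaE_eq, deltaE_zero]
  rw [div_eq_zero_iff]
  left
  simp [pKd, pK0]
  field_simp
  right; norm_num

lemma eventually_good : ∃ ε₀ > (0:ℝ), ∀ ε : ℝ, |ε| < ε₀ →
    |deltaE (m+3) ε + ((m:ℝ)+3)*((m:ℝ)+4)| ≤ kap m ∧ |gammaE (m+3) ε| ≤ kap m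
      ∧ pDd m ε ≠ 0 := by
  have hk := kap_pos m
  have h1 : ∀ᶠ ε in nhds (0:ℝ), |deltaE (m+3) ε + ((m:ℝ)+3)*((m:ℝ)+4)| ≤ kap m := by
    have := (deltaE_contAt m).tendsto
    rw [deltaE_zero] at this
    have h2 := this.eventually (Metric.closedBall_mem_nhds (-(((m:ℝ)+3)*((m:ℝ)+4))) hk)
    filter_upwards [h2] with ε hε
    rw [Real.dist_eq, sub_neg_eq_add] at hε
    exact hε
  have h2 : ∀ᶠ ε in nhds (0:ℝ), |gammaE (m+3) ε| ≤ kap m := by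
    have := (gammaE_contAt m).tendsto
    rw [gammaE_zero] at this
    have h2 := this.eventually (Metric.closedBall_mem_nhds 0 hk)
    filter_upwards [h2] with ε hε
    rw [Real.dist_eq, sub_zero] at hε
    exact hε
  have h3 : ∀ᶠ ε in nhds (0:ℝ), pDd m ε ≠ 0 :=
    (pDd_contAt m).eventually_ne (pDd_zero_ne m)
  have := (h1.and h2).and h3
  rw [Metric.eventually_nhds_iff] at this
  obtain ⟨ε₀, hε₀, h⟩ := this
  refine ⟨ε₀, hε₀, fun ε hε => ?_⟩
  have hd : dist ε 0 < ε₀ := by rwa [Real.dist_eq, sub_zero]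
  have := h hd
  exact ⟨this.1.1, this.1.2, this.2⟩
end
lemma cQ_one (m : ℕ) (d g : ℝ) : cQ m d g 1 = 0 := by
  have h2 : ((m:ℝ)+2) ≠ 0 := by positivity
  have h3 : ((m:ℝ)+3) ≠ 0 := by positivity
  have h4 : ((m:ℝ)+4) ≠ 0 := by positivity
  have h5 : ((m:ℝ)+5) ≠ 0 := by positivity
  simp only [cQ, aF, bF, one_pow]
  field_simp
  ring

lemma cQd_one (m : ℕ) (d g : ℝ) : cQd m d g 1 = 0 := by
  have h2 : ((m:ℝ)+2) ≠ 0 := by positivity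
  have h3 : ((m:ℝ)+3) ≠ 0 := by positivity
  have h4 : ((m:ℝ)+4) ≠ 0 := by positivity
  have h5 : ((m:ℝ)+5) ≠ 0 := by positivity
  simp only [cQd, bF, one_pow]
  field_simp
  ring


lemma pD1_pos (m : ℕ) (ε : ℝ) (h0 : 0 ≤ ε) (h1 : ε ≤ 1/4) : 0 < pD1 m ε := by
  have hM0 : (0:ℝ) ≤ (m:ℝ) := Nat.cast_nonneg m
  have hε1 : ε ≤ 1 := by linarith
  have hp1 : ε^(m+5) ≤ ε := by
    calc ε^(m+5) ≤ ε^1 := pow_le_pow_of_le_one h0 hε1 (by omega)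
    _ = ε := pow_one ε
  have hp2 : 0 ≤ ε^(m+4) := pow_nonneg h0 _
  simp only [pD1]
  nlinarith [hp1, hp2, hM0]


/-- Lemma 4.8: Q_ε(ρ) > 0 for all ρ ∈ (ε, 1), if ε is sufficiently small. -/
theorem Qe_pos (n : ℕ) (hn : 3 ≤ n) :
    ∃ ε₀ > (0 : ℝ), ∀ ε : ℝ, 0 < ε → ε < ε₀ →
      ∀ ρ : ℝ, ε < ρ → ρ < 1 → Qe n ε ρ > 0 := by
  obtain ⟨m, rfl⟩ : ∃ m, n = m + 3 := ⟨n - 3, by omega⟩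
  obtain ⟨ε₁, hε₁, hgood⟩ := eventually_good m
  refine ⟨min ε₁ (1/4), lt_min hε₁ (by norm_num), fun ε hε0 hεlt ρ hρε hρ1 => ?_⟩
  have hM0 : (0:ℝ) ≤ (m:ℝ) := Nat.cast_nonneg m
  have hεε₁ : |ε| < ε₁ := by
    rw [abs_of_pos hε0]; exact lt_of_lt_of_le hεlt (min_le_left _ _)
  have hε14 : ε ≤ 1/4 := le_of_lt (lt_of_lt_of_le hεlt (min_le_right _ _))
  obtain ⟨hu, hv, hDd⟩ := hgood ε hεε₁
  have hD1 : pD1 m ε ≠ 0 := ne_of_gt (pD1_pos m ε (le_of_lt hε0) hε14)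
  have hε1 : ε < 1 := lt_trans hρε hρ1
  set d := deltaE (m+3) ε with hd
  set g := gammaE (m+3) ε with hg
  have hu' : |d + ((m:ℝ)+3)*((m:ℝ)+4)| ≤ 1/1000 := le_trans hu (kap_le m)
  have hv' : |g| ≤ 1/1000 := le_trans hv (kap_le m)
  -- identities
  have hQ1 : cQ m d g 1 = 0 := cQ_one m d g
  have hQd1 : cQd m d g 1 = 0 := cQd_one m d g
  have hQε : cQ m d g ε = 0 := cQ_eps m ε d g hD1 (gammaE_eq m ε)
  have hQdε : cQd m d g ε = ε^(m+1)*(1-ε) :=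
    cQd_eps m ε d g hD1 hDd (gammaE_eq m ε) (deltaE_eq m ε)
  have hQdεpos : 0 < cQd m d g ε := by
    rw [hQdε]
    exact mul_pos (pow_pos hε0 _) (by linarith)
  rw [gt_iff_lt, Qe_eq m ε ρ, ← hd, ← hg]
  rcases le_or_gt ρ (((m:ℝ)+1)/((m:ℝ)+5)) with hcase | hcase
  · -- left region
    have hεθ : ε < ((m:ℝ)+1)/((m:ℝ)+5) := lt_of_lt_of_le hρε hcase
    have monoQd : StrictMonoOn (fun x => cQd m d g x) (Set.Icc ε (((m:ℝ)+1)/((m:ℝ)+5))) := by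
      apply strictMonoOn_of_deriv_pos (convex_Icc _ _)
        (fun x hx => (hasDerivAt_cQd m d g x).continuousAt.continuousWithinAt)
      intro x hx
      rw [interior_Icc] at hx
      rw [(hasDerivAt_cQd m d g x).deriv]
      exact mul_pos (pow_pos (lt_trans hε0 hx.1) m)
        (cC_pos_left m d g x hu' hv' (le_of_lt (lt_trans hε0 hx.1)) (le_of_lt hx.2))
    have hQdpos : ∀ x ∈ Set.Ioo ε (((m:ℝ)+1)/((m:ℝ)+5)), 0 < cQd m d g x := by
      intro x hx
      have := monoQd (Set.left_mem_Icc.mpr (le_of_lt hεθ))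
        ⟨le_of_lt hx.1, le_of_lt hx.2⟩ hx.1
      simp only at this
      linarith [hQdεpos]
    have monoQ : StrictMonoOn (fun x => cQ m d g x) (Set.Icc ε (((m:ℝ)+1)/((m:ℝ)+5))) := by
      apply strictMonoOn_of_deriv_pos (convex_Icc _ _)
        (fun x hx => (hasDerivAt_cQ m d g x).continuousAt.continuousWithinAt)
      intro x hx
      rw [interior_Icc] at hx
      rw [(hasDerivAt_cQ m d g x).deriv]
      exact hQdpos x hx
    have := monoQ (Set.left_mem_Icc.mpr (le_of_lt hεθ))
      ⟨le_of_lt hρε, hcase⟩ hρε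
    simp only at this
    linarith [hQε]
  · rcases le_or_gt ρ (1 - 1/(4*((m:ℝ)+3))) with hcase2 | hcase2
    · -- middle region
      exact cQ_pos_mid m d g ρ hu hv (le_of_lt hcase) hcase2
    · -- right region
      have hθ₂ : (0:ℝ) < 1 - 1/(4*((m:ℝ)+3)) := by
        have : 1/(4*((m:ℝ)+3)) ≤ 1/12 := by
          rw [div_le_div_iff₀ (by positivity) (by norm_num)]
          linarith
        linarith
      have hθ₂1 : (1 - 1/(4*((m:ℝ)+3))) ≤ 1 := by
        have : (0:ℝ) < 1/(4*((m:ℝ)+3)) := by positivity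
        linarith
      have monoQd2 : StrictMonoOn (fun x => cQd m d g x) (Set.Icc (1 - 1/(4*((m:ℝ)+3))) 1) := by
        apply strictMonoOn_of_deriv_pos (convex_Icc _ _)
          (fun x hx => (hasDerivAt_cQd m d g x).continuousAt.continuousWithinAt)
        intro x hx
        rw [interior_Icc] at hx
        rw [(hasDerivAt_cQd m d g x).deriv]
        exact mul_pos (pow_pos (lt_trans hθ₂ hx.1) m)
          (cC_pos_right m d g x hu' hv' (le_of_lt hx.1) (le_of_lt hx.2))
      have hQdneg : ∀ x ∈ Set.Ioo (1 - 1/(4*((m:ℝ)+3))) 1, cQd m d g x < 0 := by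
        intro x hx
        have := monoQd2 ⟨le_of_lt hx.1, le_of_lt hx.2⟩
          (Set.right_mem_Icc.mpr hθ₂1) hx.2
        simp only at this
        linarith [hQd1]
      have antiQ : StrictAntiOn (fun x => cQ m d g x) (Set.Icc (1 - 1/(4*((m:ℝ)+3))) 1) := by
        apply strictAntiOn_of_deriv_neg (convex_Icc _ _)
          (fun x hx => (hasDerivAt_cQ m d g x).continuousAt.continuousWithinAt)
        intro x hx
        rw [interior_Icc] at hx
        rw [(hasDerivAt_cQ m d g x).deriv]
        exact hQdneg x hx
      have := antiQ ⟨le_of_lt hcase2, le_of_lt hρ1⟩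
        (Set.right_mem_Icc.mpr hθ₂1) hρ1
      simp only at this
      linarith [hQ1]
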